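/- Let G be a finite group and let v ∈ G be a CC-generator. Then for every u ∈ ⟨v⟩, the closed neighborhood of v in the enhanced power graph EPow(G) is contained in the closed neighborhood of u in EPow(G): N_{EPow(G)}[v] ⊆ N_{EPow(G)}[u]. -/

import Mathlib

/-- The enhanced power graph of a group `G`: distinct `x` and `y` are adjacent iff
there is `z` with `x ∈ ⟨z⟩` and `y ∈ ⟨z⟩`. -/
def ePowGraph (G : Type*) [Group G] : SimpleGraph G where
  Adj x y := x ≠ y ∧ ∃ z : G, x ∈ Subgroup.zpowers z ∧ y ∈ Subgroup.zpowers z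
  symm := by
    constructor
    rintro x y ⟨hne, z, hx, hy⟩
    exact ⟨hne.symm, z, hy, hx⟩
  loopless := by
    constructor
    rintro x ⟨hne, -⟩
    exact hne rfl

/-- The closed neighborhood of a vertex in a simple graph. -/
def closedNbhd {V : Type*} (X : SimpleGraph V) (v : V) : Set V :=
  insert v (X.neighborSet v)

theorem self_mem_closedNbhd {V : Type*} (X : SimpleGraph V) (v : V) :
    v ∈ closedNbhd X v := Set.mem_insert v _

/-- `v` is a CC-generator: `⟨v⟩` is not properly contained in any cyclic subgroup,
i.e. `v ∈ ⟨g⟩` implies `⟨g⟩ = ⟨v⟩`. -/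
def IsCCGenerator {G : Type*} [Group G] (v : G) : Prop :=
  ∀ g : G, v ∈ Subgroup.zpowers g → Subgroup.zpowers g = Subgroup.zpowers v

/-- If `v` is a CC-generator, then for every `u ∈ ⟨v⟩` the closed neighborhood of `v`
in the enhanced power graph is contained in that of `u`. -/
theorem closedNbhd_subset_in_ePowGraph_of_ccGenerator
    {G : Type*} [Group G] [Finite G] (v : G) (hcc : IsCCGenerator v) :
    ∀ u ∈ Subgroup.zpowers v,
      closedNbhd (ePowGraph G) v ⊆ closedNbhd (ePowGraph G) u := by
  intro u hu x hx
  rcases hx with rfl | hadj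
  · by_cases h : x = u
    · exact h ▸ self_mem_closedNbhd _ _
    · exact Set.mem_insert_iff.2 (Or.inr ⟨Ne.symm h, x, hu, Subgroup.mem_zpowers x⟩)
  · obtain ⟨hne, z, hv, hxz⟩ := hadj
    have hz := hcc z hv
    by_cases h : x = u
    · exact h ▸ self_mem_closedNbhd _ _
    · exact Set.mem_insert_iff.2 (Or.inr ⟨Ne.symm h, z, hz ▸ hu, hxz⟩)
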